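/- Suppose P = V†V, |ψ⟩ ∈ H_N is a unit vector, Q^{(1)},…,Q^{(M)} are operators on H_N of operator norm at most 1, and for every partial product S = Q^{(m)}⋯Q^{(1)} with 0 ≤ m ≤ M one has ‖P S|ψ⟩ − S|ψ⟩‖ ≤ ε. Then |⟨ψ|P Q^{(M)} P Q^{(M−1)} P ⋯ P Q^{(1)} P|ψ⟩ − ⟨ψ|Q^{(M)}⋯Q^{(1)}|ψ⟩| ≤ (M+1)ε(1+ε)^{M}. -/

import Mathlib

open ContinuousLinearMap

/-- quantitative approximate homomorphism property / Remark 1.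
`S m = Q^{(m)}⋯Q^{(1)}` are the partial products, `R m = P Q^{(m)} P ⋯ P Q^{(1)} P ψ`
(so that `⟨ψ, R M⟩ = ⟨ψ_p|∏ Q_p^{(i)}|ψ_p⟩`).  If every partial product stays
`ε`-close to the `P`-fixed subspace and `‖P‖ ≤ 1 + ε`, then the spoofed `M`-point
function is `(M+1)ε(1+ε)^M`-close to the true one. -/
theorem stmt_3 (N n M : ℕ) (ε : ℝ) (hε : 0 ≤ ε)
    (V : EuclideanSpace ℂ (Fin N) →L[ℂ] EuclideanSpace ℂ (Fin n))
    (Q : ℕ → (EuclideanSpace ℂ (Fin N) →L[ℂ] EuclideanSpace ℂ (Fin N)))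
    (hQ : ∀ i, ‖Q i‖ ≤ 1)
    (ψ : EuclideanSpace ℂ (Fin N)) (hψ : ‖ψ‖ = 1)
    (P : EuclideanSpace ℂ (Fin N) →L[ℂ] EuclideanSpace ℂ (Fin N))
    (hP : P = ContinuousLinearMap.adjoint V ∘L V)
    (hPnorm : ‖P‖ ≤ 1 + ε)
    (S : ℕ → (EuclideanSpace ℂ (Fin N) →L[ℂ] EuclideanSpace ℂ (Fin N)))
    (hS0 : S 0 = 1) (hSsucc : ∀ m, S (m + 1) = Q (m + 1) ∘L S m)
    (hclose : ∀ m ≤ M, ‖P (S m ψ) - S m ψ‖ ≤ ε)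
    (R : ℕ → EuclideanSpace ℂ (Fin N))
    (hR0 : R 0 = P ψ) (hRsucc : ∀ m, R (m + 1) = P (Q (m + 1) (R m))) :
    ‖(inner ℂ ψ (R M) : ℂ) - (inner ℂ ψ (S M ψ) : ℂ)‖ ≤ (M + 1) * ε * (1 + ε) ^ M := by
  have key : ∀ m ≤ M, ‖R m - S m ψ‖ ≤ (m + 1) * ε * (1 + ε) ^ m := by
    intro m
    induction m with
    | zero =>
      intro _
      have h0 := hclose 0 (Nat.zero_le M)
      rw [hR0]
      rw [hS0] at h0 ⊢
      simpa using h0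
    | succ m ih =>
      intro hm
      have ih' := ih (Nat.le_of_succ_le hm)
      have hcl := hclose (m + 1) hm
      have hrep : R (m + 1) - S (m + 1) ψ
          = P (Q (m + 1) (R m - S m ψ)) + (P (S (m + 1) ψ) - S (m + 1) ψ) := by
        rw [hRsucc, hSsucc m]
        simp only [map_sub, ContinuousLinearMap.comp_apply]
        abel
      have h1 : ‖P (Q (m + 1) (R m - S m ψ))‖ ≤ (1 + ε) * ((m + 1) * ε * (1 + ε) ^ m) := by
        calc ‖P (Q (m + 1) (R m - S m ψ))‖ ≤ ‖P‖ * ‖Q (m + 1) (R m - S m ψ)‖ :=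
              P.le_opNorm _
          _ ≤ ‖P‖ * (‖Q (m + 1)‖ * ‖R m - S m ψ‖) := by
              gcongr; exact (Q (m + 1)).le_opNorm _
          _ ≤ (1 + ε) * (1 * ((m + 1) * ε * (1 + ε) ^ m)) := by
              refine mul_le_mul hPnorm (mul_le_mul (hQ _) ih' (norm_nonneg _) zero_le_one) ?_ (by linarith)
              positivity
          _ = (1 + ε) * ((m + 1) * ε * (1 + ε) ^ m) := by ring
      have hnorm : ‖R (m + 1) - S (m + 1) ψ‖
          ≤ (1 + ε) * ((m + 1) * ε * (1 + ε) ^ m) + ε := by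
        rw [hrep]
        exact (norm_add_le _ _).trans (add_le_add h1 hcl)
      refine hnorm.trans ?_
      have hpow : (1 : ℝ) ≤ (1 + ε) ^ (m + 1) := one_le_pow₀ (by linarith)
      have hle : ε ≤ ε * (1 + ε) ^ (m + 1) := le_mul_of_one_le_right hε hpow
      push_cast
      calc (1 + ε) * (((m : ℝ) + 1) * ε * (1 + ε) ^ m) + ε
          = ((m : ℝ) + 1) * ε * (1 + ε) ^ (m + 1) + ε := by ring
        _ ≤ ((m : ℝ) + 1) * ε * (1 + ε) ^ (m + 1) + ε * (1 + ε) ^ (m + 1) := by linarith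
        _ = ((m : ℝ) + 1 + 1) * ε * (1 + ε) ^ (m + 1) := by ring
  have hM := key M le_rfl
  calc ‖(inner ℂ ψ (R M) : ℂ) - (inner ℂ ψ (S M ψ) : ℂ)‖
      = ‖(inner ℂ ψ (R M - S M ψ) : ℂ)‖ := by rw [inner_sub_right]
    _ ≤ ‖ψ‖ * ‖R M - S M ψ‖ := norm_inner_le_norm _ _
    _ = ‖R M - S M ψ‖ := by rw [hψ, one_mul]
    _ ≤ (M + 1) * ε * (1 + ε) ^ M := hM
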